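/- With the polynomial Kreweras triangle (K_{n,k}), for all n ≥ 1, the polynomial K_{n,1} evaluated at x and reduced modulo x^2 is congruent to (-1)^{n-1} h_{n-1} · x, where h_m = h_{m+1,1} is the normalized median Genocchi number; equivalently, the coefficient of x in K_{n,1} is (-1)^{n-1} h_{n-1} and the constant coefficient is 0. -/

import Mathlib

open Polynomial

theorem lando_conjecture (K : ℕ → ℕ → Polynomial ℤ) (h : ℕ → ℕ → ℤ)
    (hK01 : K 0 1 = 1)
    (hK11 : K 1 1 = X)
    (hKrec1 : ∀ n, 2 ≤ n → K n 1 = (X - 1) * K (n - 1) 1 - ∑ i ∈ Finset.Icc 2 (n - 1), K (n - 1) i)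
    (hKrec2 : ∀ n, 2 ≤ n → K n 2 = 2 * K n 1 + K (n - 1) 1 - X ^ 2 * K (n - 2) 1)
    (hKreck : ∀ n k, 3 ≤ k → k ≤ n →
      K n k = 2 * K n (k - 1) - K n (k - 2) + K (n - 1) (k - 1) + K (n - 1) (k - 2)
        + 2 * X * K (n - 2) (k - 2))
    (h11 : h 1 1 = 1)
    (hrec1 : ∀ n, 2 ≤ n → h n 1 = ∑ i ∈ Finset.Icc 1 (n - 1), h (n - 1) i)
    (hrec2 : ∀ n, 2 ≤ n → h n 2 = 2 * h n 1 - h (n - 1) 1)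
    (hreck : ∀ n k, 3 ≤ k → k ≤ n →
      h n k = 2 * h n (k - 1) - h n (k - 2) - h (n - 1) (k - 1) - h (n - 1) (k - 2)) :
    ∀ n, 1 ≤ n → (K n 1).coeff 0 = 0 ∧
      (K n 1).coeff 1 = (-1) ^ (n - 1) * h ((n - 1) + 1) 1 := by
  have hC2 : (2 : Polynomial ℤ) = C 2 := by norm_num
  have c2mul : ∀ (p : Polynomial ℤ) (n : ℕ), ((2 : Polynomial ℤ) * p).coeff n = 2 * p.coeff n := by
    intro p n; rw [hC2, coeff_C_mul]
  have cX0 : ∀ p : Polynomial ℤ, (X * p).coeff 0 = 0 := by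
    intro p; rw [mul_coeff_zero, coeff_X_zero, zero_mul]
  have cX1 : ∀ p : Polynomial ℤ, (X * p).coeff 1 = p.coeff 0 := fun p => coeff_X_mul p 0
  have cX2_0 : ∀ p : Polynomial ℤ, (X ^ 2 * p).coeff 0 = 0 := by
    intro p; rw [pow_two, mul_assoc, cX0]
  have cX2_1 : ∀ p : Polynomial ℤ, (X ^ 2 * p).coeff 1 = 0 := by
    intro p; rw [pow_two, mul_assoc, cX1, cX0]
  have c2X_0 : ∀ p : Polynomial ℤ, ((2 : Polynomial ℤ) * X * p).coeff 0 = 0 := by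
    intro p; rw [mul_assoc, c2mul, cX0, mul_zero]
  have c2X_1 : ∀ p : Polynomial ℤ, ((2 : Polynomial ℤ) * X * p).coeff 1 = 2 * p.coeff 0 := by
    intro p; rw [mul_assoc, c2mul, cX1]
  have main : ∀ m, ∀ k, 1 ≤ k → k ≤ m + 1 →
      (K (m + 1) k).coeff 0 = 0 ∧ (K (m + 1) k).coeff 1 = (-1) ^ m * h (m + 1) k := by
    intro m
    induction m using Nat.strong_induction_on with
    | _ m ihm =>
      intro k
      induction k using Nat.strong_induction_on with
      | _ k ihk =>
        intro hk1 hkup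
        obtain rfl | rfl | hk3 : k = 1 ∨ k = 2 ∨ 3 ≤ k := by omega
        · -- k = 1
          rcases Nat.eq_zero_or_pos m with rfl | hm
          · simp [hK11, h11]
          · obtain ⟨m', rfl⟩ : ∃ m', m = m' + 1 := ⟨m - 1, by omega⟩
            have e1 := hKrec1 (m' + 2) (by omega)
            simp only [show m' + 2 - 1 = m' + 1 from by omega] at e1
            have hP := ihm m' (Nat.lt_succ_self m') 1 le_rfl (by omega)
            have hsum0 : (∑ i ∈ Finset.Icc 2 (m' + 1), K (m' + 1) i).coeff 0 = 0 := by
              rw [finset_sum_coeff]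
              apply Finset.sum_eq_zero
              intro i hi
              simp only [Finset.mem_Icc] at hi
              exact (ihm m' (Nat.lt_succ_self m') i (by omega) hi.2).1
            have hsum1 : (∑ i ∈ Finset.Icc 2 (m' + 1), K (m' + 1) i).coeff 1
                = (-1) ^ m' * ∑ i ∈ Finset.Icc 2 (m' + 1), h (m' + 1) i := by
              rw [finset_sum_coeff, Finset.mul_sum]
              apply Finset.sum_congr rfl
              intro i hi
              simp only [Finset.mem_Icc] at hi
              exact (ihm m' (Nat.lt_succ_self m') i (by omega) hi.2).2
            have hh := hrec1 (m' + 2) (by omega)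
            simp only [show m' + 2 - 1 = m' + 1 from by omega] at hh
            have hins : Finset.Icc 1 (m' + 1) = insert 1 (Finset.Icc 2 (m' + 1)) := by
              ext x; simp only [Finset.mem_insert, Finset.mem_Icc]; omega
            rw [hins, Finset.sum_insert (by simp)] at hh
            constructor
            · rw [e1, coeff_sub, mul_coeff_zero, hP.1, hsum0]; ring
            · rw [e1, coeff_sub, sub_mul, one_mul, coeff_sub, cX1, hP.1, hP.2, hsum1, hh,
                pow_succ]
              ring
        · -- k = 2
          obtain ⟨m', rfl⟩ : ∃ m', m = m' + 1 := ⟨m - 1, by omega⟩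
          have e2 := hKrec2 (m' + 2) (by omega)
          simp only [show m' + 2 - 1 = m' + 1 from by omega,
            show m' + 2 - 2 = m' from by omega] at e2
          have hA := ihk 1 (by omega) le_rfl (by omega)
          have hB := ihm m' (Nat.lt_succ_self m') 1 le_rfl (by omega)
          have hh := hrec2 (m' + 2) (by omega)
          simp only [show m' + 2 - 1 = m' + 1 from by omega] at hh
          constructor
          · rw [e2, coeff_sub, coeff_add, c2mul, hA.1, hB.1, cX2_0]; ring
          · rw [e2, coeff_sub, coeff_add, c2mul, hA.2, hB.2, cX2_1, hh, pow_succ]; ring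
        · -- 3 ≤ k
          obtain ⟨m'', rfl⟩ : ∃ m'', m = m'' + 2 := ⟨m - 2, by omega⟩
          have e3 := hKreck (m'' + 3) k hk3 (by omega)
          simp only [show m'' + 3 - 1 = m'' + 2 from by omega,
            show m'' + 3 - 2 = m'' + 1 from by omega] at e3
          have hA := ihk (k - 1) (by omega) (by omega) (by omega)
          have hB := ihk (k - 2) (by omega) (by omega) (by omega)
          have hC := ihm (m'' + 1) (by omega) (k - 1) (by omega) (by omega)
          have hD := ihm (m'' + 1) (by omega) (k - 2) (by omega) (by omega)
          have hE := ihm m'' (by omega) (k - 2) (by omega) (by omega)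
          have hh := hreck (m'' + 3) k hk3 (by omega)
          simp only [show m'' + 3 - 1 = m'' + 2 from by omega] at hh
          constructor
          · rw [e3, coeff_add, coeff_add, coeff_add, coeff_sub, c2mul, hA.1, hB.1, hC.1,
              hD.1, c2X_0]
            ring
          · rw [e3, coeff_add, coeff_add, coeff_add, coeff_sub, c2mul, hA.2, hB.2, hC.2,
              hD.2, c2X_1, hE.1, hh, pow_succ]
            ring
  intro n hn
  obtain ⟨m, rfl⟩ : ∃ m, n = m + 1 := ⟨n - 1, by omega⟩
  simp only [Nat.add_sub_cancel]
  exact main m 1 le_rfl (by omega)
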